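/- arXiv:0711.0089 — 3 statements merged into one kernel-verified Lean document; each statement's English description precedes it below -/
import Mathlib

section
/- Let D and D_n be closed densely defined operators on a Hilbert space H whose adjoints are densely defined, with Dom D ⊆ Dom D_n and Dom D* ⊆ Dom D_n*. Assume D_n f → D f for all f ∈ Dom D and D_n* f → D* f for all f ∈ Dom D*. Then for every z ∈ ℂ \ [0,∞), (D_n* D_n - z)⁻¹ → (D* D - z)⁻¹ strongly. -/
open scoped InnerProductSpace
open Filter

variable {E : Type*} [NormedAddCommGroup E] [InnerProductSpace ℂ E] [CompleteSpace E]

/-- `R` is the (two-sided) resolvent of the (possibly unbounded) operator `T` at `z`,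
i.e. `R = (T - z)⁻¹`. -/
def IsResolvent (T : E →ₗ.[ℂ] E) (z : ℂ) (R : E →L[ℂ] E) : Prop :=
  (∀ f : E, ∃ h : R f ∈ T.domain, T ⟨R f, h⟩ - z • R f = f) ∧
  (∀ x : T.domain, R (T x - z • (x : E)) = (x : E))

/-- `S = D* D` for a densely defined operator `D` with densely defined adjoint. -/
def IsStarComp (D S : E →ₗ.[ℂ] E) : Prop :=
  (∀ x : E, x ∈ S.domain ↔ ∃ h : x ∈ D.domain, D ⟨x, h⟩ ∈ D.adjoint.domain) ∧
  (∀ (x : E) (hxS : x ∈ S.domain) (hxD : x ∈ D.domain)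
      (hDx : D ⟨x, hxD⟩ ∈ D.adjoint.domain),
    S ⟨x, hxS⟩ = D.adjoint ⟨D ⟨x, hxD⟩, hDx⟩)

lemma aux_key {z : ℂ} (hz : z.im ≠ 0 ∨ z.re < 0) :
    ∃ d > 0, ∀ a b : ℝ, 0 ≤ a → 0 ≤ b → b * d ≤ ‖(a : ℂ) - z * (b : ℂ)‖ := by
  rcases hz with h | h
  · refine ⟨|z.im|, abs_pos.2 h, fun a b ha hb => ?_⟩
    calc b * |z.im| = |((a:ℂ) - z*(b:ℂ)).im| := by
          simp [Complex.sub_im, Complex.mul_im, abs_mul, abs_of_nonneg hb, mul_comm]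
       _ ≤ ‖(a:ℂ) - z*(b:ℂ)‖ := Complex.abs_im_le_norm _
  · refine ⟨-z.re, by linarith, fun a b ha hb => ?_⟩
    calc b * (-z.re) ≤ a - z.re * b := by nlinarith
       _ = ((a:ℂ) - z*(b:ℂ)).re := by simp [Complex.sub_re, Complex.mul_re]
       _ ≤ |((a:ℂ) - z*(b:ℂ)).re| := le_abs_self _
       _ ≤ ‖(a:ℂ) - z*(b:ℂ)‖ := Complex.abs_re_le_norm _

lemma aux_inner_self (x : E) : ⟪x, x⟫_ℂ = ((‖x‖ : ℂ))^2 := by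
  exact_mod_cast inner_self_eq_norm_sq_to_K (𝕜 := ℂ) x

lemma aux_pairing {T : E →ₗ.[ℂ] E} (hT : Dense (T.domain : Set E))
    (u : T.adjoint.domain) (v : T.domain) :
    ⟪(v : E), (T.adjoint u : E)⟫_ℂ = ⟪T v, (u : E)⟫_ℂ := by
  calc ⟪(v : E), (T.adjoint u : E)⟫_ℂ
      = starRingEnd ℂ ⟪(T.adjoint u : E), (v : E)⟫_ℂ := (inner_conj_symm _ _).symm
    _ = starRingEnd ℂ ⟪(u : E), T v⟫_ℂ := by
        rw [LinearPMap.adjoint_isFormalAdjoint hT u v]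
    _ = ⟪T v, (u : E)⟫_ℂ := inner_conj_symm _ _

/-- If `D_n`, `D` are closed densely defined operators with densely defined adjoints,
`Dom D ⊆ Dom D_n`, `Dom D* ⊆ Dom D_n*`, `D_n f → D f` on `Dom D` and `D_n* f → D* f`
on `Dom D*`, then `(D_n* D_n − z)⁻¹ → (D* D − z)⁻¹` strongly for every
`z ∈ ℂ \ [0,∞)`. -/
theorem resolvent_strong_convergence [TopologicalSpace.SeparableSpace E]
    (D : E →ₗ.[ℂ] E) (Dn : ℕ → E →ₗ.[ℂ] E)
    (hDclosed : D.IsClosed) (hDdense : Dense (D.domain : Set E))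
    (hDadjdense : Dense (D.adjoint.domain : Set E))
    (hDnclosed : ∀ n, (Dn n).IsClosed) (hDndense : ∀ n, Dense ((Dn n).domain : Set E))
    (hDnadjdense : ∀ n, Dense ((Dn n).adjoint.domain : Set E))
    (hdom : ∀ n, D.domain ≤ (Dn n).domain)
    (hdomadj : ∀ n, D.adjoint.domain ≤ (Dn n).adjoint.domain)
    (hconv : ∀ x : D.domain,
      Filter.Tendsto (fun n => (Dn n) ⟨(x : E), hdom n x.2⟩) Filter.atTop (nhds (D x)))
    (hconvadj : ∀ x : D.adjoint.domain,
      Filter.Tendsto (fun n => (Dn n).adjoint ⟨(x : E), hdomadj n x.2⟩)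
        Filter.atTop (nhds (D.adjoint x)))
    (S : E →ₗ.[ℂ] E) (Sn : ℕ → E →ₗ.[ℂ] E)
    (hS : IsStarComp D S) (hSn : ∀ n, IsStarComp (Dn n) (Sn n))
    (z : ℂ) (hz : z.im ≠ 0 ∨ z.re < 0)
    (R : E →L[ℂ] E) (hR : IsResolvent S z R)
    (Rn : ℕ → E →L[ℂ] E) (hRn : ∀ n, IsResolvent (Sn n) z (Rn n)) :
    ∀ f : E, Filter.Tendsto (fun n => Rn n f) Filter.atTop (nhds (R f)) := by
  intro f
  obtain ⟨d, hd, hkey⟩ := aux_key hz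
  obtain ⟨hxS, hxeq⟩ := hR.1 f
  obtain ⟨hxD, hDx⟩ := (hS.1 (R f)).1 hxS
  have hSx := hS.2 (R f) hxS hxD hDx
  choose hmem heq using fun n => (hRn n).1 f
  choose hnD hnDx using fun n => ((hSn n).1 (Rn n f)).1 (hmem n)
  have hSnx : ∀ n, (Sn n) ⟨Rn n f, hmem n⟩
      = (Dn n).adjoint ⟨(Dn n) ⟨Rn n f, hnD n⟩, hnDx n⟩ :=
    fun n => (hSn n).2 _ (hmem n) (hnD n) (hnDx n)
  -- identity (1): ⟪xₙ, f⟫ = ⟪Aₙ, Aₙ⟫ - z ⟪xₙ, xₙ⟫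
  have h1 : ∀ n, ⟪Rn n f, f⟫_ℂ
      = ⟪(Dn n) ⟨Rn n f, hnD n⟩, (Dn n) ⟨Rn n f, hnD n⟩⟫_ℂ - z * ⟪Rn n f, Rn n f⟫_ℂ := by
    intro n
    have e1 : ⟪Rn n f, ((Sn n) ⟨Rn n f, hmem n⟩ : E)⟫_ℂ
        = ⟪(Dn n) ⟨Rn n f, hnD n⟩, (Dn n) ⟨Rn n f, hnD n⟩⟫_ℂ := by
      rw [hSnx n]
      exact aux_pairing (hDndense n) ⟨_, hnDx n⟩ ⟨Rn n f, hnD n⟩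
    calc ⟪Rn n f, f⟫_ℂ
        = ⟪Rn n f, (Sn n) ⟨Rn n f, hmem n⟩ - z • Rn n f⟫_ℂ := by rw [heq n]
      _ = _ := by rw [inner_sub_right, inner_smul_right, e1]
  -- identity (2): ⟪x, f⟫ = ⟪A, A⟫ - z ⟪x, x⟫
  have h2 : ⟪R f, f⟫_ℂ = ⟪D ⟨R f, hxD⟩, D ⟨R f, hxD⟩⟫_ℂ - z * ⟪R f, R f⟫_ℂ := by
    have e1 : ⟪R f, (S ⟨R f, hxS⟩ : E)⟫_ℂ = ⟪D ⟨R f, hxD⟩, D ⟨R f, hxD⟩⟫_ℂ := by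
      rw [hSx]
      exact aux_pairing hDdense ⟨_, hDx⟩ ⟨R f, hxD⟩
    calc ⟪R f, f⟫_ℂ = ⟪R f, S ⟨R f, hxS⟩ - z • R f⟫_ℂ := by rw [hxeq]
      _ = _ := by rw [inner_sub_right, inner_smul_right, e1]
  -- identity (3): ⟪x, f⟫ = ⟪Bₙ, Aₙ⟫ - z ⟪x, xₙ⟫
  have h3 : ∀ n, ⟪R f, f⟫_ℂ
      = ⟪(Dn n) ⟨R f, hdom n hxD⟩, (Dn n) ⟨Rn n f, hnD n⟩⟫_ℂ - z * ⟪R f, Rn n f⟫_ℂ := by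
    intro n
    have e1 : ⟪R f, ((Sn n) ⟨Rn n f, hmem n⟩ : E)⟫_ℂ
        = ⟪(Dn n) ⟨R f, hdom n hxD⟩, (Dn n) ⟨Rn n f, hnD n⟩⟫_ℂ := by
      rw [hSnx n]
      exact aux_pairing (hDndense n) ⟨_, hnDx n⟩ ⟨R f, hdom n hxD⟩
    calc ⟪R f, f⟫_ℂ
        = ⟪R f, (Sn n) ⟨Rn n f, hmem n⟩ - z • Rn n f⟫_ℂ := by rw [heq n]
      _ = _ := by rw [inner_sub_right, inner_smul_right, e1]
  -- identity (4): ⟪xₙ, f⟫ = ⟪Aₙ, A⟫ + ⟪xₙ, Ee⟫ - ⟪xₙ, Eₙ⟫ - z ⟪xₙ, x⟫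
  have h4 : ∀ n, ⟪Rn n f, f⟫_ℂ
      = ⟪(Dn n) ⟨Rn n f, hnD n⟩, D ⟨R f, hxD⟩⟫_ℂ
        + ⟪Rn n f, (D.adjoint ⟨D ⟨R f, hxD⟩, hDx⟩ : E)⟫_ℂ
        - ⟪Rn n f, ((Dn n).adjoint ⟨D ⟨R f, hxD⟩, hdomadj n hDx⟩ : E)⟫_ℂ
        - z * ⟪Rn n f, R f⟫_ℂ := by
    intro n
    have e1 : ⟪Rn n f, ((Dn n).adjoint ⟨D ⟨R f, hxD⟩, hdomadj n hDx⟩ : E)⟫_ℂ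
        = ⟪(Dn n) ⟨Rn n f, hnD n⟩, D ⟨R f, hxD⟩⟫_ℂ :=
      aux_pairing (hDndense n) ⟨_, hdomadj n hDx⟩ ⟨Rn n f, hnD n⟩
    calc ⟪Rn n f, f⟫_ℂ = ⟪Rn n f, S ⟨R f, hxS⟩ - z • R f⟫_ℂ := by rw [hxeq]
      _ = ⟪Rn n f, (D.adjoint ⟨D ⟨R f, hxD⟩, hDx⟩ : E)⟫_ℂ - z * ⟪Rn n f, R f⟫_ℂ := by
          rw [inner_sub_right, inner_smul_right, hSx]
      _ = _ := by rw [e1]; ring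
  -- the key identity
  have hQ : ∀ n,
      ((‖(Dn n) ⟨Rn n f, hnD n⟩ - D ⟨R f, hxD⟩‖ : ℂ))^2
        - z * ((‖Rn n f - R f‖ : ℂ))^2
      = ⟪Rn n f, (D.adjoint ⟨D ⟨R f, hxD⟩, hDx⟩ : E)
            - ((Dn n).adjoint ⟨D ⟨R f, hxD⟩, hdomadj n hDx⟩ : E)⟫_ℂ
        + ⟪(Dn n) ⟨R f, hdom n hxD⟩ - D ⟨R f, hxD⟩, (Dn n) ⟨Rn n f, hnD n⟩⟫_ℂ := by
    intro n
    rw [← aux_inner_self, ← aux_inner_self]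
    simp only [inner_sub_left, inner_sub_right]
    linear_combination h4 n - h1 n - h2 + h3 n
  -- bound on ‖xₙ‖
  have hxnb : ∀ n, ‖Rn n f‖ ≤ ‖f‖ / d := by
    intro n
    have e : ((‖(Dn n) ⟨Rn n f, hnD n⟩‖ : ℂ))^2 - z * ((‖Rn n f‖ : ℂ))^2
        = ⟪Rn n f, f⟫_ℂ := by
      rw [← aux_inner_self, ← aux_inner_self]
      linear_combination (h1 n).symm
    have hb := hkey (‖(Dn n) ⟨Rn n f, hnD n⟩‖^2) (‖Rn n f‖^2) (sq_nonneg _) (sq_nonneg _)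
    rw [show ((‖(Dn n) ⟨Rn n f, hnD n⟩‖^2 : ℝ) : ℂ) = ((‖(Dn n) ⟨Rn n f, hnD n⟩‖ : ℂ))^2
        by push_cast; ring,
      show ((‖Rn n f‖^2 : ℝ) : ℂ) = ((‖Rn n f‖ : ℂ))^2 by push_cast; ring, e] at hb
    have hb2 : ‖Rn n f‖^2 * d ≤ ‖Rn n f‖ * ‖f‖ := by
      refine hb.trans ?_
      exact norm_inner_le_norm _ _
    rcases eq_or_lt_of_le (norm_nonneg (Rn n f)) with h0 | h0
    · rw [← h0]; positivity
    · rw [le_div_iff₀ hd]; nlinarith [h0, hb2]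
  -- bound on ‖Aₙ‖
  set M : ℝ := Real.sqrt (‖f‖ * (‖f‖ / d) + ‖z‖ * (‖f‖ / d)^2) with hM
  have hAnb : ∀ n, ‖(Dn n) ⟨Rn n f, hnD n⟩‖ ≤ M := by
    intro n
    have e : ((‖(Dn n) ⟨Rn n f, hnD n⟩‖ : ℂ))^2
        = ⟪Rn n f, f⟫_ℂ + z * ((‖Rn n f‖ : ℂ))^2 := by
      rw [← aux_inner_self, ← aux_inner_self]
      linear_combination -h1 n
    have e2 : ‖(Dn n) ⟨Rn n f, hnD n⟩‖^2
        = ‖⟪Rn n f, f⟫_ℂ + z * ((‖Rn n f‖ : ℂ))^2‖ := by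
      rw [← e]
      rw [show ((‖(Dn n) ⟨Rn n f, hnD n⟩‖ : ℂ))^2
          = ((‖(Dn n) ⟨Rn n f, hnD n⟩‖^2 : ℝ) : ℂ) by push_cast; ring]
      rw [Complex.norm_real, Real.norm_eq_abs, abs_of_nonneg (sq_nonneg _)]
    have e3 : ‖(Dn n) ⟨Rn n f, hnD n⟩‖^2 ≤ ‖f‖ * (‖f‖ / d) + ‖z‖ * (‖f‖ / d)^2 := by
      rw [e2]
      have i1 : ‖⟪Rn n f, f⟫_ℂ‖ ≤ ‖Rn n f‖ * ‖f‖ := by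
        exact norm_inner_le_norm _ _
      have i2 : ‖z * ((‖Rn n f‖ : ℂ))^2‖ = ‖z‖ * ‖Rn n f‖^2 := by
        rw [norm_mul, norm_pow, Complex.norm_real, Real.norm_eq_abs, abs_of_nonneg (norm_nonneg _)]
      have i3 := norm_add_le (⟪Rn n f, f⟫_ℂ) (z * ((‖Rn n f‖ : ℂ))^2)
      have i4 : ‖Rn n f‖ ≤ ‖f‖ / d := hxnb n
      have i5 : (0:ℝ) ≤ ‖z‖ := norm_nonneg z
      calc ‖⟪Rn n f, f⟫_ℂ + z * ((‖Rn n f‖ : ℂ))^2‖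
          ≤ ‖⟪Rn n f, f⟫_ℂ‖ + ‖z * ((‖Rn n f‖ : ℂ))^2‖ := i3
        _ ≤ ‖Rn n f‖ * ‖f‖ + ‖z‖ * ‖Rn n f‖^2 := by rw [i2]; exact add_le_add i1 le_rfl
        _ ≤ ‖f‖ * (‖f‖ / d) + ‖z‖ * (‖f‖ / d)^2 :=
            add_le_add (by rw [mul_comm]; exact mul_le_mul_of_nonneg_left i4 (norm_nonneg f))
              (mul_le_mul_of_nonneg_left (pow_le_pow_left₀ (norm_nonneg _) i4 2) i5)
    calc ‖(Dn n) ⟨Rn n f, hnD n⟩‖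
        = Real.sqrt (‖(Dn n) ⟨Rn n f, hnD n⟩‖^2) := (Real.sqrt_sq (norm_nonneg _)).symm
      _ ≤ M := Real.sqrt_le_sqrt e3
  -- convergence of the error terms
  have t1 : Tendsto (fun n => ‖(D.adjoint ⟨D ⟨R f, hxD⟩, hDx⟩ : E)
      - ((Dn n).adjoint ⟨D ⟨R f, hxD⟩, hdomadj n hDx⟩ : E)‖) atTop (nhds 0) := by
    have h := ((hconvadj ⟨D ⟨R f, hxD⟩, hDx⟩).const_sub
      ((D.adjoint ⟨D ⟨R f, hxD⟩, hDx⟩ : E))).norm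
    simpa using h
  have t2 : Tendsto (fun n => ‖(Dn n) ⟨R f, hdom n hxD⟩ - D ⟨R f, hxD⟩‖) atTop (nhds 0) := by
    have h := ((hconv ⟨R f, hxD⟩).sub_const ((D ⟨R f, hxD⟩ : E))).norm
    simpa using h
  -- squeeze
  have hbound : ∀ n, ‖Rn n f - R f‖^2
      ≤ (‖f‖ / d * ‖(D.adjoint ⟨D ⟨R f, hxD⟩, hDx⟩ : E)
            - ((Dn n).adjoint ⟨D ⟨R f, hxD⟩, hdomadj n hDx⟩ : E)‖
          + ‖(Dn n) ⟨R f, hdom n hxD⟩ - D ⟨R f, hxD⟩‖ * M) / d := by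
    intro n
    have hb := hkey (‖(Dn n) ⟨Rn n f, hnD n⟩ - D ⟨R f, hxD⟩‖^2) (‖Rn n f - R f‖^2)
      (sq_nonneg _) (sq_nonneg _)
    rw [show ((‖(Dn n) ⟨Rn n f, hnD n⟩ - D ⟨R f, hxD⟩‖^2 : ℝ) : ℂ)
        = ((‖(Dn n) ⟨Rn n f, hnD n⟩ - D ⟨R f, hxD⟩‖ : ℂ))^2 by push_cast; ring,
      show ((‖Rn n f - R f‖^2 : ℝ) : ℂ) = ((‖Rn n f - R f‖ : ℂ))^2 by push_cast; ring,
      hQ n] at hb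
    have i0 := norm_add_le
      (⟪Rn n f, (D.adjoint ⟨D ⟨R f, hxD⟩, hDx⟩ : E)
          - ((Dn n).adjoint ⟨D ⟨R f, hxD⟩, hdomadj n hDx⟩ : E)⟫_ℂ)
      (⟪(Dn n) ⟨R f, hdom n hxD⟩ - D ⟨R f, hxD⟩, (Dn n) ⟨Rn n f, hnD n⟩⟫_ℂ)
    have i1 : ‖⟪Rn n f, (D.adjoint ⟨D ⟨R f, hxD⟩, hDx⟩ : E)
        - ((Dn n).adjoint ⟨D ⟨R f, hxD⟩, hdomadj n hDx⟩ : E)⟫_ℂ‖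
        ≤ (‖f‖ / d) * ‖(D.adjoint ⟨D ⟨R f, hxD⟩, hDx⟩ : E)
            - ((Dn n).adjoint ⟨D ⟨R f, hxD⟩, hdomadj n hDx⟩ : E)‖ := by
      exact (norm_inner_le_norm _ _).trans
        (mul_le_mul_of_nonneg_right (hxnb n) (norm_nonneg _))
    have i2 : ‖⟪(Dn n) ⟨R f, hdom n hxD⟩ - D ⟨R f, hxD⟩,
        (Dn n) ⟨Rn n f, hnD n⟩⟫_ℂ‖
        ≤ ‖(Dn n) ⟨R f, hdom n hxD⟩ - D ⟨R f, hxD⟩‖ * M := by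
      exact (norm_inner_le_norm _ _).trans
        (mul_le_mul_of_nonneg_left (hAnb n) (norm_nonneg _))
    rw [le_div_iff₀ hd]
    exact hb.trans (i0.trans (add_le_add i1 i2))
  have hsq : Tendsto (fun n => ‖Rn n f - R f‖^2) atTop (nhds 0) := by
    refine squeeze_zero (fun n => sq_nonneg _) hbound ?_
    have h := ((t1.const_mul (‖f‖ / d)).add (t2.mul_const M)).div_const d
    simpa using h
  have hn : Tendsto (fun n => ‖Rn n f - R f‖) atTop (nhds 0) := by
    have h := (Real.continuous_sqrt.tendsto 0).comp hsq
    have heqf : (fun n => Real.sqrt (‖Rn n f - R f‖^2)) = fun n => ‖Rn n f - R f‖ :=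
      funext fun n => Real.sqrt_sq (norm_nonneg _)
    rw [Function.comp_def] at h
    rw [← heqf]
    simpa using h
  rw [tendsto_iff_norm_sub_tendsto_zero]
  exact hn
end

section
/- Suppose ξ, η are integrable functions (ξ ∈ L¹([0,∞), (1+λ²)⁻¹dλ) supported in [0,∞), η ∈ L¹(ℝ)) and that for all z in a nonempty open subset of (−∞,0), ∫_0^∞ ξ(t)(t − z)⁻² dt = −(2z)⁻¹ ∫_ℝ η(t) ∂_t [t (t² − z)^{-1/2}] dt. Then for all z < 0, ∫_0^∞ ξ(t) [(t − z)⁻¹ − (t + 1)⁻¹] dt = ∫_ℝ η(t) [(t² − z)^{-1/2} − (t² + 1)^{-1/2}] dt. -/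
open MeasureTheory Complex Set Metric Filter Topology

section
variable (ξ : ℝ → ℝ)

lemma xi_aesm (hξ : MeasureTheory.IntegrableOn (fun t => ξ t / (1 + t ^ 2)) (Set.Ici 0)) :
    AEStronglyMeasurable ξ (volume.restrict (Ioi 0)) := by
  have h0 : AEStronglyMeasurable (fun t => ξ t / (1 + t ^ 2)) (volume.restrict (Ioi 0)) :=
    hξ.aestronglyMeasurable.mono_measure (Measure.restrict_mono Ioi_subset_Ici_self le_rfl)
  have hc : Continuous (fun t : ℝ => 1 + t ^ 2) := by continuity
  have h1 := h0.mul hc.aestronglyMeasurable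
  refine h1.congr (Filter.Eventually.of_forall fun t => ?_)
  have : (1:ℝ) + t ^ 2 ≠ 0 := by positivity
  simp only [Pi.mul_apply]; field_simp

lemma lb1 (z : ℂ) (t a : ℝ) (ht : 0 ≤ t) (ha : z.re ≤ -a) : t + a ≤ ‖(t:ℂ) - z‖ := by
  calc t + a ≤ (((t:ℂ) - z)).re := by simp [Complex.sub_re]; linarith
  _ ≤ |(((t:ℂ) - z)).re| := le_abs_self _
  _ ≤ ‖_‖ := Complex.abs_re_le_norm _

lemma lb2 (z : ℂ) (t a : ℝ) (ha : z.re ≤ -a) : t^2 + a ≤ ‖(t:ℂ)^2 - z‖ := by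
  calc t^2 + a ≤ (((t:ℂ)^2 - z)).re := by
        simp [Complex.sub_re, ← Complex.ofReal_pow]; linarith
  _ ≤ |(((t:ℂ)^2 - z)).re| := le_abs_self _
  _ ≤ ‖_‖ := Complex.abs_re_le_norm _

lemma keyineq (a t : ℝ) (ha : 0 < a) (ht : 0 ≤ t) : min a 1 * (1 + t^2) ≤ (t + a) * (t + 1) := by
  rcases le_total a 1 with h | h
  · rw [min_eq_left h]; nlinarith
  · rw [min_eq_right h]; nlinarith

lemma sq_lb (a t : ℝ) (ha : 0 < a) (ht : 0 ≤ t) : min a 1 ^ 2 * (1 + t^2) ≤ (t + a)^2 := by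
  rcases le_total a 1 with h | h
  · rw [min_eq_left h]; nlinarith [mul_nonneg (mul_nonneg ht ht) ha.le, sq_nonneg t, mul_nonneg ht ha.le, mul_nonneg (mul_nonneg ht ht) (mul_nonneg ha.le ha.le)]
  · rw [min_eq_right h]; nlinarith [mul_nonneg ht ha.le]

lemma meas_A (hξ : MeasureTheory.IntegrableOn (fun t => ξ t / (1 + t ^ 2)) (Set.Ici 0)) (z : ℂ) :
    AEStronglyMeasurable
      (fun t : ℝ => (ξ t:ℂ) * (((t:ℂ)-z)⁻¹ - ((t:ℂ)+1)⁻¹)) (volume.restrict (Ioi 0)) := by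
  refine (Complex.continuous_ofReal.comp_aestronglyMeasurable (xi_aesm ξ hξ)).mul
    (Measurable.aestronglyMeasurable ?_)
  exact ((Complex.measurable_ofReal.sub measurable_const).inv).sub
    ((Complex.measurable_ofReal.add measurable_const).inv)

lemma meas_A' (hξ : MeasureTheory.IntegrableOn (fun t => ξ t / (1 + t ^ 2)) (Set.Ici 0)) (z : ℂ) :
    AEStronglyMeasurable
      (fun t : ℝ => (ξ t:ℂ) * (((t:ℂ)-z)⁻¹)^2) (volume.restrict (Ioi 0)) := by
  refine (Complex.continuous_ofReal.comp_aestronglyMeasurable (xi_aesm ξ hξ)).mul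
    (Measurable.aestronglyMeasurable ?_)
  exact ((Complex.measurable_ofReal.sub measurable_const).inv).pow_const 2

lemma ball_re (z₀ : ℂ) (a : ℝ) (hz₀ : z₀.re ≤ -2*a) : ∀ z ∈ ball z₀ a, z.re ≤ -a := by
  intro z hz
  have h1 : |z.re - z₀.re| ≤ ‖z - z₀‖ := by
    rw [← Complex.sub_re]; exact Complex.abs_re_le_norm _
  rw [mem_ball, Complex.dist_eq] at hz
  have h2 := (abs_le.1 (h1.trans hz.le)).2
  linarith

lemma ne_of_re_le (z : ℂ) (a t : ℝ) (ha : 0 < a) (hz : z.re ≤ -a) (ht : 0 ≤ t) :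
    (t:ℂ) - z ≠ 0 := by
  intro h
  have := lb1 z t a ht hz
  rw [h] at this; simp at this; linarith

-- integrability of the A-integrand
lemma int_A (hξ : MeasureTheory.IntegrableOn (fun t => ξ t / (1 + t ^ 2)) (Set.Ici 0))
    (z : ℂ) (hz : z.re < 0) :
    Integrable (fun t : ℝ => (ξ t:ℂ) * (((t:ℂ)-z)⁻¹ - ((t:ℂ)+1)⁻¹))
      (volume.restrict (Ioi 0)) := by
  set a : ℝ := -z.re with ha_def
  have ha : 0 < a := by rw [ha_def]; linarith
  have hm : 0 < min a 1 := lt_min ha one_pos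
  have hza : z.re ≤ -a := by rw [ha_def]; linarith
  have hξi : IntegrableOn (fun t => ξ t / (1 + t ^ 2)) (Ioi 0) := hξ.mono_set Ioi_subset_Ici_self
  refine Integrable.mono' ((hξi.abs).const_mul (‖1+z‖ / min a 1))
    (meas_A ξ hξ z) ?_
  rw [ae_restrict_iff' measurableSet_Ioi]
  refine Filter.Eventually.of_forall fun t ht => ?_
  rw [mem_Ioi] at ht
  have h2 : (0:ℝ) < 1 + t^2 := by positivity
  have htz : (t:ℂ) - z ≠ 0 := ne_of_re_le z a t ha hza ht.le
  have ht1 : (t:ℂ) + 1 ≠ 0 := by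
    intro h
    have := congrArg Complex.re h
    simp at this; linarith
  have habs1 : ‖(t:ℂ) + 1‖ = t + 1 := by
    rw [show (t:ℂ) + 1 = ((t + 1 : ℝ) : ℂ) by push_cast; ring, Complex.norm_real,
      Real.norm_eq_abs, abs_of_pos (by linarith)]
  have hd : ((t:ℂ)-z)⁻¹ - ((t:ℂ)+1)⁻¹ = (1+z) * (((t:ℂ)-z) * ((t:ℂ)+1))⁻¹ := by
    field_simp
    ring
  have hlb : min a 1 * (1 + t^2) ≤ ‖(t:ℂ)-z‖ * ‖(t:ℂ)+1‖ := by
    rw [habs1]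
    calc min a 1 * (1 + t^2) ≤ (t + a) * (t + 1) := keyineq a t ha ht.le
    _ ≤ ‖(t:ℂ)-z‖ * (t + 1) := by
        have := lb1 z t a ht.le hza
        nlinarith
  calc ‖(ξ t:ℂ) * (((t:ℂ)-z)⁻¹ - ((t:ℂ)+1)⁻¹)‖
      = |ξ t| * (‖1+z‖ * (‖(t:ℂ)-z‖ * ‖(t:ℂ)+1‖)⁻¹) := by
        rw [hd]; simp only [norm_mul, norm_inv, Complex.norm_real, Real.norm_eq_abs]
  _ ≤ |ξ t| * (‖1+z‖ * (min a 1 * (1 + t^2))⁻¹) := by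
        gcongr
  _ = ‖1+z‖ / min a 1 * |ξ t / (1 + t^2)| := by
        rw [abs_div, abs_of_pos h2]
        field_simp

lemma hasDerivAt_A (hξ : MeasureTheory.IntegrableOn (fun t => ξ t / (1 + t ^ 2)) (Set.Ici 0))
    (z₀ : ℂ) (hz₀ : z₀.re < 0) :
    HasDerivAt (fun z => ∫ t in Ioi (0:ℝ), (ξ t:ℂ) * (((t:ℂ)-z)⁻¹ - ((t:ℂ)+1)⁻¹))
      (∫ t in Ioi (0:ℝ), (ξ t:ℂ) * (((t:ℂ)-z₀)⁻¹)^2) z₀ := by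
  set a : ℝ := -z₀.re / 2 with ha_def
  have ha : 0 < a := by rw [ha_def]; linarith
  have hm : 0 < min a 1 := lt_min ha one_pos
  have hball : ∀ z ∈ ball z₀ a, z.re ≤ -a := ball_re z₀ a (by rw [ha_def]; ring_nf; linarith)
  have hξi : IntegrableOn (fun t => ξ t / (1 + t ^ 2)) (Ioi 0) := hξ.mono_set Ioi_subset_Ici_self
  have key := hasDerivAt_integral_of_dominated_loc_of_deriv_le (μ := volume.restrict (Ioi 0))
    (F := fun z (t : ℝ) => (ξ t:ℂ) * (((t:ℂ)-z)⁻¹ - ((t:ℂ)+1)⁻¹))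
    (F' := fun z (t : ℝ) => (ξ t:ℂ) * (((t:ℂ)-z)⁻¹)^2)
    (x₀ := z₀) (s := ball z₀ a) (bound := fun t => (min a 1 ^ 2)⁻¹ * |ξ t / (1 + t^2)|)
    (ball_mem_nhds z₀ ha) (Filter.Eventually.of_forall (meas_A ξ hξ)) (int_A ξ hξ z₀ hz₀) (meas_A' ξ hξ z₀)
    ?_ ((hξi.abs).const_mul _) ?_
  · exact key.2
  · -- bound
    rw [ae_restrict_iff' measurableSet_Ioi]
    refine Filter.Eventually.of_forall fun t ht z hz => ?_
    rw [mem_Ioi] at ht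
    have h2 : (0:ℝ) < 1 + t^2 := by positivity
    have hlb := lb1 z t a ht.le (hball z hz)
    have hsq : min a 1 ^ 2 * (1 + t^2) ≤ ‖(t:ℂ)-z‖ ^ 2 := by
      calc min a 1 ^ 2 * (1 + t^2) ≤ (t + a)^2 := sq_lb a t ha ht.le
      _ ≤ ‖(t:ℂ)-z‖ ^ 2 := by nlinarith [norm_nonneg ((t:ℂ)-z)]
    calc ‖(ξ t:ℂ) * (((t:ℂ)-z)⁻¹)^2‖
        = |ξ t| * (‖(t:ℂ)-z‖ ^ 2)⁻¹ := by
          simp only [norm_mul, norm_pow, norm_inv, Complex.norm_real, Real.norm_eq_abs, inv_pow]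
    _ ≤ |ξ t| * (min a 1 ^ 2 * (1 + t^2))⁻¹ := by
          gcongr
    _ = (min a 1 ^ 2)⁻¹ * |ξ t / (1 + t^2)| := by
          rw [abs_div, abs_of_pos h2]
          field_simp
  · -- differentiability
    rw [ae_restrict_iff' measurableSet_Ioi]
    refine Filter.Eventually.of_forall fun t ht z hz => ?_
    rw [mem_Ioi] at ht
    have htz : (t:ℂ) - z ≠ 0 := ne_of_re_le z a t ha (hball z hz) ht.le
    have h1 : HasDerivAt (fun z : ℂ => (t:ℂ) - z) (-1) z := by
      simpa using (hasDerivAt_id z).const_sub ((t:ℂ))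
    have h2 : HasDerivAt (fun z : ℂ => ((t:ℂ) - z)⁻¹) (((t:ℂ) - z)⁻¹ ^ 2) z := by
      have := h1.inv htz
      refine this.congr_deriv ?_
      field_simp
    exact (h2.sub_const _).const_mul _
end

section
variable (η : ℝ → ℝ)

lemma lb2' (z : ℂ) (t a : ℝ) (ha : z.re ≤ -a) : t^2 + a ≤ ‖(t:ℂ)^2 - z‖ := by
  calc t^2 + a ≤ (((t:ℂ)^2 - z)).re := by
        simp [Complex.sub_re, ← Complex.ofReal_pow]; linarith
  _ ≤ |(((t:ℂ)^2 - z)).re| := le_abs_self _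
  _ ≤ ‖_‖ := Complex.abs_re_le_norm _

lemma slit1 (z : ℂ) (t a : ℝ) (ha : 0 < a) (hz : z.re ≤ -a) :
    (t:ℂ)^2 - z ∈ Complex.slitPlane := by
  left
  simp [Complex.sub_re, ← Complex.ofReal_pow]
  nlinarith [sq_nonneg t]

lemma slit2 (t : ℝ) : (t:ℂ)^2 + 1 ∈ Complex.slitPlane := by
  left
  simp [Complex.add_re, ← Complex.ofReal_pow]
  nlinarith [sq_nonneg t]

lemma cont_cpow1 (z : ℂ) (a : ℝ) (ha : 0 < a) (hz : z.re ≤ -a) (c : ℂ) :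
    Continuous (fun t : ℝ => ((t:ℂ)^2 - z) ^ c) := by
  rw [continuous_iff_continuousAt]
  intro t
  have hb : Continuous (fun t : ℝ => (t:ℂ)^2 - z) := by
    exact ((Complex.continuous_ofReal.pow 2).sub continuous_const)
  exact ContinuousAt.comp (g := (· ^ c)) (f := fun s : ℝ => (s:ℂ)^2 - z) (x := t)
    (continuousAt_cpow_const (slit1 z t a ha hz)) hb.continuousAt

lemma cont_cpow2 (c : ℂ) : Continuous (fun t : ℝ => ((t:ℂ)^2 + 1) ^ c) := by
  rw [continuous_iff_continuousAt]
  intro t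
  have hb : Continuous (fun t : ℝ => (t:ℂ)^2 + 1) :=
    ((Complex.continuous_ofReal.pow 2).add continuous_const)
  exact ContinuousAt.comp (g := (· ^ c)) (f := fun s : ℝ => (s:ℂ)^2 + 1) (x := t)
    (continuousAt_cpow_const (slit2 t)) hb.continuousAt

lemma norm_cpow_le (w : ℂ) (a y : ℝ) (ha : 0 < a) (hw : a ≤ ‖w‖) (hy : y ≤ 0) :
    ‖w ^ ((y:ℝ):ℂ)‖ ≤ a ^ y := by
  rw [Complex.norm_cpow_real]
  exact Real.rpow_le_rpow_of_nonpos ha hw hy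

lemma meas_B (hη : MeasureTheory.Integrable η) (z : ℂ) (a : ℝ) (ha : 0 < a) (hz : z.re ≤ -a) :
    AEStronglyMeasurable
      (fun t : ℝ => (η t:ℂ) * (((t:ℂ)^2-z) ^ (-(1/2):ℂ) - ((t:ℂ)^2+1) ^ (-(1/2):ℂ)))
      (volume : Measure ℝ) :=
  (Complex.continuous_ofReal.comp_aestronglyMeasurable hη.aestronglyMeasurable).mul
    (((cont_cpow1 z a ha hz _).sub (cont_cpow2 _)).aestronglyMeasurable)

lemma meas_B' (hη : MeasureTheory.Integrable η) (z : ℂ) (a : ℝ) (ha : 0 < a) (hz : z.re ≤ -a) :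
    AEStronglyMeasurable
      (fun t : ℝ => (η t:ℂ) * ((1/2) * ((t:ℂ)^2-z) ^ (-(3/2):ℂ)))
      (volume : Measure ℝ) :=
  (Complex.continuous_ofReal.comp_aestronglyMeasurable hη.aestronglyMeasurable).mul
    ((continuous_const.mul (cont_cpow1 z a ha hz _)).aestronglyMeasurable)

lemma int_B (hη : MeasureTheory.Integrable η) (z : ℂ) (a : ℝ) (ha : 0 < a) (hz : z.re ≤ -a) :
    Integrable (fun t : ℝ => (η t:ℂ) * (((t:ℂ)^2-z) ^ (-(1/2):ℂ) - ((t:ℂ)^2+1) ^ (-(1/2):ℂ)))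
      (volume : Measure ℝ) := by
  refine Integrable.mono' ((hη.abs).mul_const (a ^ (-(1/2):ℝ) + 1)) (meas_B η hη z a ha hz) ?_
  refine Filter.Eventually.of_forall fun t => ?_
  have h1 : ‖((t:ℂ)^2-z) ^ (-(1/2):ℂ)‖ ≤ a ^ (-(1/2):ℝ) := by
    rw [show (-(1/2):ℂ) = ((-(1/2):ℝ):ℂ) by norm_num]
    refine norm_cpow_le _ a _ ha ?_ (by norm_num)
    calc a ≤ t^2 + a := by nlinarith [sq_nonneg t]
    _ ≤ _ := lb2' z t a hz
  have h2 : ‖((t:ℂ)^2+1) ^ (-(1/2):ℂ)‖ ≤ 1 := by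
    rw [show (-(1/2):ℂ) = ((-(1/2):ℝ):ℂ) by norm_num]
    have := norm_cpow_le ((t:ℂ)^2+1) 1 (-(1/2)) one_pos ?_ (by norm_num)
    · simpa using this
    · calc (1:ℝ) ≤ t^2 + 1 := by nlinarith [sq_nonneg t]
      _ ≤ _ := by
          have : ((t:ℂ)^2 + 1) = (((t^2 + 1 : ℝ)):ℂ) := by push_cast; ring
          rw [this, Complex.norm_real, Real.norm_eq_abs, abs_of_pos (by positivity)]
  calc ‖(η t:ℂ) * (((t:ℂ)^2-z) ^ (-(1/2):ℂ) - ((t:ℂ)^2+1) ^ (-(1/2):ℂ))‖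
      ≤ |η t| * (‖((t:ℂ)^2-z) ^ (-(1/2):ℂ)‖ + ‖((t:ℂ)^2+1) ^ (-(1/2):ℂ)‖) := by
        rw [norm_mul, Complex.norm_real]
        exact mul_le_mul_of_nonneg_left (norm_sub_le _ _) (abs_nonneg _)
  _ ≤ |η t| * (a ^ (-(1/2):ℝ) + 1) := by
        gcongr
  _ = |η t| * (a ^ (-(1/2):ℝ) + 1) := rfl

lemma hasDerivAt_B (hη : MeasureTheory.Integrable η) (z₀ : ℂ) (hz₀ : z₀.re < 0) :
    HasDerivAt (fun z => ∫ t : ℝ, (η t:ℂ) * (((t:ℂ)^2-z) ^ (-(1/2):ℂ) - ((t:ℂ)^2+1) ^ (-(1/2):ℂ)))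
      (∫ t : ℝ, (η t:ℂ) * ((1/2) * ((t:ℂ)^2-z₀) ^ (-(3/2):ℂ))) z₀ := by
  set a : ℝ := -z₀.re / 2 with ha_def
  have ha : 0 < a := by rw [ha_def]; linarith
  have hz₀a : z₀.re ≤ -a := by rw [ha_def]; linarith
  have hball : ∀ z ∈ ball z₀ a, z.re ≤ -a := by
    intro z hz
    have h1 : |z.re - z₀.re| ≤ ‖z - z₀‖ := by
      rw [← Complex.sub_re]; exact Complex.abs_re_le_norm _
    rw [mem_ball, Complex.dist_eq] at hz
    have h2 := (abs_le.1 (h1.trans hz.le)).2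
    rw [ha_def] at *; linarith
  have hmeas : ∀ᶠ z in 𝓝 z₀, AEStronglyMeasurable
      (fun t : ℝ => (η t:ℂ) * (((t:ℂ)^2-z) ^ (-(1/2):ℂ) - ((t:ℂ)^2+1) ^ (-(1/2):ℂ)))
      (volume : Measure ℝ) := by
    have : Metric.ball z₀ a ∈ 𝓝 z₀ := ball_mem_nhds z₀ ha
    filter_upwards [this] with z hz
    exact meas_B η hη z a ha (hball z hz)
  have key := hasDerivAt_integral_of_dominated_loc_of_deriv_le (μ := (volume : Measure ℝ))
    (F := fun z (t : ℝ) => (η t:ℂ) * (((t:ℂ)^2-z) ^ (-(1/2):ℂ) - ((t:ℂ)^2+1) ^ (-(1/2):ℂ)))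
    (F' := fun z (t : ℝ) => (η t:ℂ) * ((1/2) * ((t:ℂ)^2-z) ^ (-(3/2):ℂ)))
    (x₀ := z₀) (s := ball z₀ a) (bound := fun t => |η t| * ((1/2) * a ^ (-(3/2):ℝ)))
    (ball_mem_nhds z₀ ha) hmeas (int_B η hη z₀ a ha hz₀a) (meas_B' η hη z₀ a ha hz₀a)
    ?_ ((hη.abs).mul_const _) ?_
  · exact key.2
  · refine Filter.Eventually.of_forall fun t z hz => ?_
    have hzre := hball z hz
    have h1 : ‖((t:ℂ)^2-z) ^ (-(3/2):ℂ)‖ ≤ a ^ (-(3/2):ℝ) := by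
      rw [show (-(3/2):ℂ) = ((-(3/2):ℝ):ℂ) by norm_num]
      refine norm_cpow_le _ a _ ha ?_ (by norm_num)
      calc a ≤ t^2 + a := by nlinarith [sq_nonneg t]
      _ ≤ _ := lb2' z t a hzre
    calc ‖(η t:ℂ) * ((1/2) * ((t:ℂ)^2-z) ^ (-(3/2):ℂ))‖
        = |η t| * ((1/2) * ‖((t:ℂ)^2-z) ^ (-(3/2):ℂ)‖) := by
          rw [norm_mul, Complex.norm_real, norm_mul]
          norm_num
    _ ≤ |η t| * ((1/2) * a ^ (-(3/2):ℝ)) := by gcongr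
  · refine Filter.Eventually.of_forall fun t z hz => ?_
    have hzre := hball z hz
    have hb : HasDerivAt (fun z : ℂ => (t:ℂ)^2 - z) (-1) z := by
      simpa using (hasDerivAt_id z).const_sub ((t:ℂ)^2)
    have h1 : HasDerivAt (fun z : ℂ => ((t:ℂ)^2 - z) ^ (-(1/2):ℂ))
        ((1/2) * ((t:ℂ)^2 - z) ^ (-(3/2):ℂ)) z := by
      have := hb.cpow_const (c := (-(1/2):ℂ)) (slit1 z t a ha hzre)
      convert this using 1
      rw [show (-(1/2) - 1 : ℂ) = -(3/2) by norm_num]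
      ring
    exact (h1.sub_const _).const_mul _
end

section glue
lemma real_deriv_sqrt (z t : ℝ) (hz : z < 0) :
    HasDerivAt (fun s => s / Real.sqrt (s ^ 2 - z)) (-z / ((t^2 - z) * Real.sqrt (t^2 - z))) t := by
  have hw : 0 < t^2 - z := by nlinarith [sq_nonneg t]
  have hs : Real.sqrt (t^2 - z) ≠ 0 := by positivity
  have h1 : HasDerivAt (fun s : ℝ => s ^ 2 - z) (2*t) t := by
    simpa using ((hasDerivAt_pow 2 t).sub_const z)
  have h2 : HasDerivAt (fun s : ℝ => Real.sqrt (s ^ 2 - z)) (t / Real.sqrt (t^2 - z)) t := by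
    have := (Real.hasDerivAt_sqrt (by positivity : t^2 - z ≠ 0)).comp t h1
    refine this.congr_deriv ?_
    field_simp
  have h3 := (hasDerivAt_id t).div h2 hs
  refine h3.congr_deriv ?_
  rw [Real.sq_sqrt hw.le]
  field_simp
  simp only [id]
  nlinarith [Real.sq_sqrt hw.le, Real.sqrt_nonneg (t^2-z)]

lemma cpow_half_eq (w : ℝ) (hw : 0 < w) :
    ((w:ℂ)) ^ (-(1/2):ℂ) = (((Real.sqrt w)⁻¹ : ℝ) : ℂ) := by
  rw [show (-(1/2):ℂ) = ((-(1/2):ℝ):ℂ) by norm_num, ← Complex.ofReal_cpow hw.le]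
  norm_cast
  rw [Real.rpow_neg hw.le, Real.sqrt_eq_rpow]

lemma cpow_threehalf_eq (w : ℝ) (hw : 0 < w) :
    ((w:ℂ)) ^ (-(3/2):ℂ) = (((w * Real.sqrt w)⁻¹ : ℝ) : ℂ) := by
  rw [show (-(3/2):ℂ) = ((-(3/2):ℝ):ℂ) by norm_num, ← Complex.ofReal_cpow hw.le]
  norm_cast
  rw [Real.rpow_neg hw.le]
  congr 1
  rw [show (3/2 : ℝ) = 1 + 1/2 by norm_num, Real.rpow_add hw, Real.rpow_one, Real.sqrt_eq_rpow]

lemma integral_ofReal' (f : ℝ → ℝ) (μ : MeasureTheory.Measure ℝ) :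
    ∫ x, ((f x : ℝ) : ℂ) ∂μ = ((∫ x, f x ∂μ : ℝ) : ℂ) :=
  integral_ofReal
end glue

/-- If the differentiated trace identity
`∫_0^∞ ξ(t)(t − z)⁻² dt = −(2z)⁻¹ ∫ η(t) ∂_t[t(t² − z)^{-1/2}] dt` holds on a nonempty
open subset of `(−∞, 0)`, then the integrated identity
`∫_0^∞ ξ(t)[(t − z)⁻¹ − (t + 1)⁻¹] dt = ∫ η(t)[(t² − z)^{-1/2} − (t² + 1)^{-1/2}] dt`
holds for all `z < 0`. -/
theorem integrated_trace_identity
    (ξ η : ℝ → ℝ)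
    (hξ : MeasureTheory.IntegrableOn (fun t => ξ t / (1 + t ^ 2)) (Set.Ici 0))
    (hη : MeasureTheory.Integrable η)
    (U : Set ℝ) (hUopen : IsOpen U) (hUne : U.Nonempty) (hUsub : U ⊆ Set.Iio 0)
    (hid : ∀ z ∈ U,
      ∫ t in Set.Ioi (0:ℝ), ξ t / (t - z) ^ 2 =
        -(2 * z)⁻¹ * ∫ t, η t * deriv (fun s => s / Real.sqrt (s ^ 2 - z)) t) :
    ∀ z < (0:ℝ),
      ∫ t in Set.Ioi (0:ℝ), ξ t * ((t - z)⁻¹ - (t + 1)⁻¹) =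
        ∫ t, η t * ((Real.sqrt (t ^ 2 - z))⁻¹ - (Real.sqrt (t ^ 2 + 1))⁻¹) := by
  classical
  set Fc : ℂ → ℂ := fun w => (∫ t in Ioi (0:ℝ), (ξ t:ℂ) * (((t:ℂ)-w)⁻¹ - ((t:ℂ)+1)⁻¹))
    - ∫ t : ℝ, (η t:ℂ) * (((t:ℂ)^2-w) ^ (-(1/2):ℂ) - ((t:ℂ)^2+1) ^ (-(1/2):ℂ)) with hFc
  set Gc : ℂ → ℂ := fun w => (∫ t in Ioi (0:ℝ), (ξ t:ℂ) * (((t:ℂ)-w)⁻¹)^2)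
    - ∫ t : ℝ, (η t:ℂ) * ((1/2) * ((t:ℂ)^2-w) ^ (-(3/2):ℂ)) with hGc
  set Ω : Set ℂ := {w : ℂ | w.re < 0} with hΩdef
  have hΩopen : IsOpen Ω := isOpen_lt Complex.continuous_re continuous_const
  have hΩconv : Convex ℝ Ω := convex_halfSpace_re_lt 0
  have hF : ∀ w ∈ Ω, HasDerivAt Fc (Gc w) w := fun w hw =>
    (hasDerivAt_A ξ hξ w hw).sub (hasDerivAt_B η hη w hw)
  have hFdiff : DifferentiableOn ℂ Fc Ω := fun w hw =>
    ((hF w hw).differentiableAt).differentiableWithinAt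
  have hDanal : AnalyticOnNhd ℂ (deriv Fc) Ω := (hFdiff.analyticOnNhd hΩopen).deriv
  have hderiv : ∀ w ∈ Ω, deriv Fc w = Gc w := fun w hw => (hF w hw).deriv
  have hG0 : ∀ u ∈ U, Gc ((u:ℝ):ℂ) = 0 := by
    intro u hu
    have hu0 : u < 0 := hUsub hu
    have hw : ∀ t : ℝ, 0 < t^2 - u := fun t => by nlinarith [sq_nonneg t]
    have e1 : (∫ t in Ioi (0:ℝ), (ξ t:ℂ) * (((t:ℂ)-((u:ℝ):ℂ))⁻¹)^2)
        = ((∫ t in Ioi (0:ℝ), ξ t / (t - u) ^ 2 : ℝ) : ℂ) := by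
      refine Eq.trans (integral_congr_ae (Filter.Eventually.of_forall fun t => ?_))
        (integral_ofReal' _ _)
      beta_reduce
      push_cast
      rw [div_eq_mul_inv, inv_pow]
    have e2 : (∫ t : ℝ, (η t:ℂ) * ((1/2) * ((t:ℂ)^2-((u:ℝ):ℂ)) ^ (-(3/2):ℂ)))
        = ((∫ t : ℝ, η t * ((1/2) * ((t^2 - u) * Real.sqrt (t^2 - u))⁻¹) : ℝ) : ℂ) := by
      refine Eq.trans (integral_congr_ae (Filter.Eventually.of_forall fun t => ?_))
        (integral_ofReal' _ _)
      beta_reduce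
      have hc : ((t:ℂ)^2 - ((u:ℝ):ℂ)) = (((t^2 - u : ℝ)):ℂ) := by push_cast; ring
      rw [hc, cpow_threehalf_eq _ (hw t)]
      push_cast
      ring
    have hdid : ∀ t : ℝ, deriv (fun s => s / Real.sqrt (s ^ 2 - u)) t
        = -u / ((t^2 - u) * Real.sqrt (t^2 - u)) := fun t => (real_deriv_sqrt u t hu0).deriv
    have hre : (∫ t in Ioi (0:ℝ), ξ t / (t - u) ^ 2)
        = ∫ t : ℝ, η t * ((1/2) * ((t^2 - u) * Real.sqrt (t^2 - u))⁻¹) := by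
      rw [hid u hu]
      have h3 : (∫ t, η t * deriv (fun s => s / Real.sqrt (s ^ 2 - u)) t)
          = ∫ t : ℝ, (-u) * (η t * ((t^2 - u) * Real.sqrt (t^2 - u))⁻¹) := by
        refine integral_congr_ae (Filter.Eventually.of_forall fun t => ?_)
        simp only [hdid]
        ring
      have h4 : (∫ t : ℝ, η t * ((1/2) * ((t^2 - u) * Real.sqrt (t^2 - u))⁻¹))
          = ∫ t : ℝ, (1/2) * (η t * ((t^2 - u) * Real.sqrt (t^2 - u))⁻¹) := by
        refine integral_congr_ae (Filter.Eventually.of_forall fun t => ?_)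
        ring
      rw [h3, h4, integral_const_mul, integral_const_mul]
      have hu' : u ≠ 0 := ne_of_lt hu0
      field_simp
    rw [hGc]
    simp only
    rw [e1, e2, hre, sub_self]
  obtain ⟨u₀, hu₀⟩ := hUne
  have hu₀0 : u₀ < 0 := hUsub hu₀
  have hu₀Ω : ((u₀:ℝ):ℂ) ∈ Ω := by simpa [hΩdef] using hu₀0
  obtain ⟨r, hr, hballU⟩ := Metric.isOpen_iff.1 hUopen u₀ hu₀
  have hfreq : ∃ᶠ w in 𝓝[≠] ((u₀:ℝ):ℂ), deriv Fc w = 0 := by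
    have htend : Filter.Tendsto (fun s : ℝ => ((s:ℝ):ℂ)) (𝓝[>] u₀) (𝓝[≠] ((u₀:ℝ):ℂ)) := by
      rw [tendsto_nhdsWithin_iff]
      constructor
      · exact Complex.continuous_ofReal.continuousAt.tendsto.mono_left nhdsWithin_le_nhds
      · filter_upwards [self_mem_nhdsWithin] with s hs
        simp only [Set.mem_compl_iff, Set.mem_singleton_iff, Complex.ofReal_inj]
        exact ne_of_gt hs
    refine htend.frequently (Filter.Eventually.frequently ?_)
    have hIoo : Ioo u₀ (u₀ + r) ∈ 𝓝[>] u₀ :=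
      Ioo_mem_nhdsGT_of_mem ⟨le_refl _, by linarith⟩
    filter_upwards [hIoo] with s hs
    have hsU : s ∈ U := by
      apply hballU
      rw [mem_ball, Real.dist_eq, abs_sub_lt_iff]
      constructor <;> [linarith [hs.2]; linarith [hs.1]]
    have hsΩ : ((s:ℝ):ℂ) ∈ Ω := by
      simpa [hΩdef] using (hUsub hsU)
    rw [hderiv _ hsΩ, hG0 s hsU]
  have hD0 : Set.EqOn (deriv Fc) 0 Ω :=
    hDanal.eqOn_zero_of_preconnected_of_frequently_eq_zero hΩconv.isPreconnected hu₀Ω hfreq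
  have hm1Ω : ((-1:ℝ):ℂ) ∈ Ω := by simp [hΩdef]
  have hFm1 : Fc ((-1:ℝ):ℂ) = 0 := by
    rw [hFc]
    simp only
    have e1 : ∀ t : ℝ, (ξ t:ℂ) * (((t:ℂ)-((-1:ℝ):ℂ))⁻¹ - ((t:ℂ)+1)⁻¹) = 0 := by
      intro t; push_cast; rw [sub_neg_eq_add]; ring
    have e2 : ∀ t : ℝ, (η t:ℂ) * (((t:ℂ)^2-((-1:ℝ):ℂ)) ^ (-(1/2):ℂ)
        - ((t:ℂ)^2+1) ^ (-(1/2):ℂ)) = 0 := by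
      intro t; push_cast; rw [sub_neg_eq_add]; ring
    rw [integral_congr_ae (Filter.Eventually.of_forall e1),
      integral_congr_ae (Filter.Eventually.of_forall e2)]
    simp
  have hFzero : ∀ w ∈ Ω, Fc w = 0 := by
    intro w hw
    have hcz : ∀ x ∈ Ω, fderivWithin ℂ Fc Ω x = 0 := by
      intro x hx
      rw [fderivWithin_of_isOpen hΩopen hx]
      have h0 : HasDerivAt Fc 0 x := by
        have hh := hF x hx
        rwa [← hderiv x hx, hD0 hx, Pi.zero_apply] at hh
      rw [h0.hasFDerivAt.fderiv]
      ext y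
      simp
    have := hΩconv.is_const_of_fderivWithin_eq_zero (𝕜 := ℂ) hFdiff hcz hw hm1Ω
    rw [this, hFm1]
  intro z hz
  have hzΩ : ((z:ℝ):ℂ) ∈ Ω := by simpa [hΩdef] using hz
  have key := hFzero _ hzΩ
  rw [hFc] at key
  simp only at key
  have hw1 : ∀ t : ℝ, 0 < t^2 - z := fun t => by nlinarith [sq_nonneg t]
  have hw2 : ∀ t : ℝ, 0 < t^2 + 1 := fun t => by positivity
  have eA : (∫ t in Ioi (0:ℝ), (ξ t:ℂ) * (((t:ℂ)-((z:ℝ):ℂ))⁻¹ - ((t:ℂ)+1)⁻¹))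
      = ((∫ t in Ioi (0:ℝ), ξ t * ((t - z)⁻¹ - (t + 1)⁻¹) : ℝ) : ℂ) := by
    refine Eq.trans (integral_congr_ae (Filter.Eventually.of_forall fun t => ?_))
      (integral_ofReal' _ _)
    beta_reduce
    push_cast
    ring
  have eB : (∫ t : ℝ, (η t:ℂ) * (((t:ℂ)^2-((z:ℝ):ℂ)) ^ (-(1/2):ℂ) - ((t:ℂ)^2+1) ^ (-(1/2):ℂ)))
      = ((∫ t : ℝ, η t * ((Real.sqrt (t ^ 2 - z))⁻¹ - (Real.sqrt (t ^ 2 + 1))⁻¹) : ℝ) : ℂ) := by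
    refine Eq.trans (integral_congr_ae (Filter.Eventually.of_forall fun t => ?_))
      (integral_ofReal' _ _)
    beta_reduce
    have c1 : ((t:ℂ)^2 - ((z:ℝ):ℂ)) = (((t^2 - z : ℝ)):ℂ) := by push_cast; ring
    have c2 : ((t:ℂ)^2 + 1) = (((t^2 + 1 : ℝ)):ℂ) := by push_cast; ring
    rw [c1, c2, cpow_half_eq _ (hw1 t), cpow_half_eq _ (hw2 t)]
    push_cast
    ring
  rw [eA, eB, sub_eq_zero] at key
  exact_mod_cast key
end

section
/- Let V : ℝ → Matrix n n ℂ be continuous with V(t) = 0 for all |t| ≥ R, and let z < 0, κ = √(−z) > 0. Then the integral equation F(t) = e^{-κ t} I + κ⁻¹ ∫_t^∞ sinh(κ(s − t)) V(s) F(s) ds has a unique continuous matrix solution F on ℝ, F is twice continuously differentiable, satisfies −F'' + V F = z F, and F(t) = e^{-κ t} I for t ≥ R. -/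
attribute [local instance] Matrix.frobeniusNormedAddCommGroup Matrix.frobeniusNormedSpace

attribute [local instance] Matrix.frobeniusNormedRing

open MeasureTheory Set Filter
open MeasureTheory Set Filter

section Aux
variable {E : Type*} [NormedAddCommGroup E] [NormedSpace ℝ E] [CompleteSpace E]
set_option linter.unusedSectionVars false

lemma aux_integrable (W : ℝ → E) (hW : Continuous W) (R₀ : ℝ)
    (h : ∀ s, R₀ ≤ |s| → W s = 0) : Integrable W := by
  apply hW.integrable_of_hasCompactSupport
  apply HasCompactSupport.intro (isCompact_Icc : IsCompact (Icc (-R₀) R₀))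
  intro x hx
  apply h
  rw [mem_Icc, not_and_or, not_le, not_le] at hx
  rcases hx with hx | hx
  · exact le_trans (by linarith) (neg_le_abs x)
  · exact le_trans hx.le (le_abs_self x)

lemma aux_split (g : ℝ → E) (hg : Integrable g) {a b : ℝ} (hab : a ≤ b) :
    ∫ s in Ioi a, g s = (∫ s in Ioc a b, g s) + ∫ s in Ioi b, g s := by
  rw [← Set.Ioc_union_Ioi_eq_Ioi hab,
    setIntegral_union (Set.Ioc_disjoint_Ioi le_rfl) measurableSet_Ioi hg.integrableOn
      hg.integrableOn]

lemma aux_hasDerivAt_Ioi (g : ℝ → E) (hg : Continuous g) (hgi : Integrable g) (t : ℝ) :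
    HasDerivAt (fun u => ∫ s in Ioi u, g s) (-g t) t := by
  have key : ∀ u : ℝ, ∫ s in Ioi u, g s = (∫ s in Ioi (0:ℝ), g s) - ∫ s in (0:ℝ)..u, g s := by
    intro u
    rcases le_total (0:ℝ) u with h | h
    · rw [intervalIntegral.integral_of_le h, aux_split g hgi h]; abel
    · rw [intervalIntegral.integral_symm, intervalIntegral.integral_of_le h, aux_split g hgi h]
      abel
  have h2 : HasDerivAt (fun u => ∫ s in (0:ℝ)..u, g s) (g t) t :=
    intervalIntegral.integral_hasDerivAt_right (hgi.intervalIntegrable)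
      (hg.stronglyMeasurableAtFilter _ _) hg.continuousAt
  exact HasDerivAt.congr_of_eventuallyEq (h2.const_sub _) (Eventually.of_forall key)

lemma hexp_neg (κ : ℝ) (t : ℝ) :
    HasDerivAt (fun u : ℝ => Real.exp (-(κ*u))) (-κ * Real.exp (-(κ*t))) t := by
  have h0 : HasDerivAt (fun u : ℝ => -(κ*u)) (-κ) t := by
    exact ((hasDerivAt_id t).const_mul κ).neg.congr_deriv (by simp)
  simpa [mul_comm] using h0.exp

lemma hexp_pos (κ : ℝ) (t : ℝ) :
    HasDerivAt (fun u : ℝ => Real.exp (κ*u)) (κ * Real.exp (κ*t)) t := by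
  have h0 : HasDerivAt (fun u : ℝ => κ*u) κ t := by
    simpa using (hasDerivAt_id t).const_mul κ
  simpa [mul_comm] using h0.exp

variable (κ R₀ : ℝ) (W : ℝ → E) (M₀ : E)

noncomputable def auxA (t : ℝ) : E := ∫ s in Ioi t, Real.exp (κ*s) • W s
noncomputable def auxB (t : ℝ) : E := ∫ s in Ioi t, Real.exp (-(κ*s)) • W s

noncomputable def Phi (t : ℝ) : E :=
  Real.exp (-(κ*t)) • M₀ + κ⁻¹ • ∫ s in Ioi t, Real.sinh (κ*(s-t)) • W s

noncomputable def Phi' (t : ℝ) : E :=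
  (-(κ * Real.exp (-(κ*t)))) • M₀
    - (2:ℝ)⁻¹ • (Real.exp (-(κ*t)) • auxA κ W t + Real.exp (κ*t) • auxB κ W t)

variable (hW : Continuous W) (hsupp : ∀ s, R₀ ≤ |s| → W s = 0)
include hW hsupp

lemma auxA_integrable : Integrable (fun s => Real.exp (κ*s) • W s) :=
  aux_integrable _ ((Real.continuous_exp.comp (continuous_const.mul continuous_id)).smul hW)
    R₀ (fun s hs => by rw [hsupp s hs, smul_zero])

lemma auxB_integrable : Integrable (fun s => Real.exp (-(κ*s)) • W s) :=
  aux_integrable _ ((Real.continuous_exp.comp (continuous_const.mul continuous_id).neg).smul hW)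
    R₀ (fun s hs => by rw [hsupp s hs, smul_zero])

lemma JJ_eq (t : ℝ) :
    ∫ s in Ioi t, Real.sinh (κ*(s-t)) • W s
      = (2⁻¹ * Real.exp (-(κ*t))) • auxA κ W t - (2⁻¹ * Real.exp (κ*t)) • auxB κ W t := by
  have hAint := auxA_integrable κ R₀ W hW hsupp
  have hBint := auxB_integrable κ R₀ W hW hsupp
  have h1 : (fun s => Real.sinh (κ*(s-t)) • W s) = fun s =>
      (2⁻¹ * Real.exp (-(κ*t))) • (Real.exp (κ*s) • W s)
        - (2⁻¹ * Real.exp (κ*t)) • (Real.exp (-(κ*s)) • W s) := by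
    funext s
    match_scalars
    simp only [Real.sinh_eq, show κ*(s-t) = κ*s - κ*t from by ring, Real.exp_sub, Real.exp_neg]
    field_simp
  have h2 : IntegrableOn (fun s => (2⁻¹ * Real.exp (-(κ*t))) • (Real.exp (κ*s) • W s))
      (Ioi t) volume := (hAint.smul _).integrableOn
  have h3 : IntegrableOn (fun s => (2⁻¹ * Real.exp (κ*t)) • (Real.exp (-(κ*s)) • W s))
      (Ioi t) volume := (hBint.smul _).integrableOn
  rw [h1, integral_sub h2 h3,
    integral_smul (2⁻¹ * Real.exp (-(κ*t))) (fun s => Real.exp (κ*s) • W s),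
    integral_smul (2⁻¹ * Real.exp (κ*t)) (fun s => Real.exp (-(κ*s)) • W s)]
  rfl

lemma auxA_hasDeriv (t : ℝ) : HasDerivAt (auxA κ W) (-(Real.exp (κ*t) • W t)) t :=
  aux_hasDerivAt_Ioi _ ((Real.continuous_exp.comp (continuous_const.mul continuous_id)).smul hW)
    (auxA_integrable κ R₀ W hW hsupp) t

lemma auxB_hasDeriv (t : ℝ) : HasDerivAt (auxB κ W) (-(Real.exp (-(κ*t)) • W t)) t :=
  aux_hasDerivAt_Ioi _
    ((Real.continuous_exp.comp (continuous_const.mul continuous_id).neg).smul hW)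
    (auxB_integrable κ R₀ W hW hsupp) t

lemma Phi_hasDeriv (hκ : κ ≠ 0) (t : ℝ) : HasDerivAt (Phi κ W M₀) (Phi' κ W M₀ t) t := by
  have hA := auxA_hasDeriv κ R₀ W hW hsupp t
  have hB := auxB_hasDeriv κ R₀ W hW hsupp t
  have key : ∀ u : ℝ, Phi κ W M₀ u
      = Real.exp (-(κ*u)) • M₀ + κ⁻¹ • ((2⁻¹ * Real.exp (-(κ*u))) • auxA κ W u
          - (2⁻¹ * Real.exp (κ*u)) • auxB κ W u) := by
    intro u; rw [Phi, JJ_eq κ R₀ W hW hsupp]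
  have hd : HasDerivAt (fun u => Real.exp (-(κ*u)) • M₀
      + κ⁻¹ • ((2⁻¹ * Real.exp (-(κ*u))) • auxA κ W u - (2⁻¹ * Real.exp (κ*u)) • auxB κ W u))
      ((-κ * Real.exp (-(κ*t))) • M₀ + κ⁻¹ •
        (((2⁻¹ * Real.exp (-(κ*t))) • (-(Real.exp (κ*t) • W t))
            + (2⁻¹ * (-κ * Real.exp (-(κ*t)))) • auxA κ W t)
          - ((2⁻¹ * Real.exp (κ*t)) • (-(Real.exp (-(κ*t)) • W t))
            + (2⁻¹ * (κ * Real.exp (κ*t))) • auxB κ W t))) t :=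
    ((hexp_neg κ t).smul_const M₀).add
      (((((hexp_neg κ t).const_mul (2:ℝ)⁻¹).smul hA).sub
        (((hexp_pos κ t).const_mul (2:ℝ)⁻¹).smul hB)).const_smul κ⁻¹)
  have hfin := hd.congr_of_eventuallyEq (Eventually.of_forall key)
  convert hfin using 1
  rw [Phi']
  match_scalars
  all_goals field_simp [Real.exp_neg]
  all_goals ring

lemma Phi'_hasDeriv (hκ : κ ≠ 0) (t : ℝ) :
    HasDerivAt (Phi' κ W M₀) ((κ^2) • Phi κ W M₀ t + W t) t := by
  have hA := auxA_hasDeriv κ R₀ W hW hsupp t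
  have hB := auxB_hasDeriv κ R₀ W hW hsupp t
  have hd : HasDerivAt (fun u => (-(κ * Real.exp (-(κ*u)))) • M₀
      - (2:ℝ)⁻¹ • (Real.exp (-(κ*u)) • auxA κ W u + Real.exp (κ*u) • auxB κ W u))
      ((-(κ * (-κ * Real.exp (-(κ*t))))) • M₀ - (2:ℝ)⁻¹ •
        ((Real.exp (-(κ*t)) • (-(Real.exp (κ*t) • W t)) + (-κ * Real.exp (-(κ*t))) • auxA κ W t)
          + (Real.exp (κ*t) • (-(Real.exp (-(κ*t)) • W t))
            + (κ * Real.exp (κ*t)) • auxB κ W t))) t :=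
    ((((hexp_neg κ t).const_mul κ).neg.smul_const M₀).sub
      ((((hexp_neg κ t).smul hA).add ((hexp_pos κ t).smul hB)).const_smul (2:ℝ)⁻¹))
  convert hd using 1
  · rfl
  rw [Phi, JJ_eq κ R₀ W hW hsupp]
  match_scalars
  all_goals field_simp [Real.exp_neg]
  all_goals ring_nf
  rw [← Real.exp_add]; simp

lemma Phi_continuous (hκ : κ ≠ 0) : Continuous (Phi κ W M₀) :=
  continuous_iff_continuousAt.2 fun t => (Phi_hasDeriv κ R₀ W M₀ hW hsupp hκ t).continuousAt

end Aux

@[reducible] noncomputable def matTopFrob {n : Type*} [Fintype n] : TopologicalSpace (Matrix n n ℂ) :=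
  (Matrix.frobeniusNormedAddCommGroup : NormedAddCommGroup (Matrix n n ℂ)).toUniformSpace.toTopologicalSpace

section Mat
set_option linter.unusedSectionVars false
variable {n : Type*} [Fintype n] [DecidableEq n]
  (V : ℝ → Matrix n n ℂ) (κ R₀ M : ℝ)
  (hV : Continuous V) (hV0 : ∀ s, R₀ ≤ |s| → V s = 0)
  (hκ : 0 < κ) (hR₀ : 0 < R₀) (hM : ∀ s, ‖V s‖ ≤ M)

attribute [local instance] matTopFrob

lemma Wcont (f : ℝ → Matrix n n ℂ) (hf : Continuous f) (hVc : Continuous V) :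
    Continuous (fun s => V s * f s) := hVc.mul hf

lemma Wsupp (f : ℝ → Matrix n n ℂ) (hV0' : ∀ s, R₀ ≤ |s| → V s = 0) :
    ∀ s, R₀ ≤ |s| → V s * f s = 0 := fun s hs => by rw [hV0' s hs, zero_mul]

include hV hV0 hκ hR₀ hM in
lemma core_estimate (f g : ℝ → Matrix n n ℂ) (hf : Continuous f) (hg : Continuous g)
    (t : ℝ) (ht : t ∈ Icc (-R₀) R₀) :
    ‖Phi κ (fun s => V s * f s) 1 t - Phi κ (fun s => V s * g s) 1 t‖
      ≤ (κ⁻¹ * (Real.sinh (κ*(2*R₀)) * M)) * ∫ s in Ioc t R₀, ‖f s - g s‖ := by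
  obtain ⟨ht1, ht2⟩ := ht
  have hM0 : 0 ≤ M := le_trans (norm_nonneg _) (hM 0)
  have hintf : Integrable (fun s => Real.sinh (κ*(s-t)) • (V s * f s)) :=
    aux_integrable _ (((Real.continuous_sinh.comp (continuous_const.mul
      (continuous_id.sub continuous_const)))).smul (hV.mul hf)) R₀
      (fun s hs => by rw [hV0 s hs, zero_mul, smul_zero])
  have hintg : Integrable (fun s => Real.sinh (κ*(s-t)) • (V s * g s)) :=
    aux_integrable _ (((Real.continuous_sinh.comp (continuous_const.mul
      (continuous_id.sub continuous_const)))).smul (hV.mul hg)) R₀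
      (fun s hs => by rw [hV0 s hs, zero_mul, smul_zero])
  have hdiff : Phi κ (fun s => V s * f s) 1 t - Phi κ (fun s => V s * g s) 1 t
      = κ⁻¹ • ∫ s in Ioc t R₀, Real.sinh (κ*(s-t)) • (V s * (f s - g s)) := by
    rw [Phi, Phi]
    have h1 : (fun s => Real.sinh (κ*(s-t)) • (V s * (f s - g s)))
        = fun s => Real.sinh (κ*(s-t)) • (V s * f s) - Real.sinh (κ*(s-t)) • (V s * g s) := by
      funext s
      rw [show V s * (f s - g s) = V s * f s - V s * g s from mul_sub _ _ _, smul_sub]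
    have h2z : ∫ s in Ioi R₀, Real.sinh (κ*(s-t)) • (V s * f s) = 0 :=
      setIntegral_eq_zero_of_forall_eq_zero (fun s hs => by
        rw [hV0 s (le_trans (le_of_lt hs) (le_abs_self s)), zero_mul, smul_zero])
    have h3z : ∫ s in Ioi R₀, Real.sinh (κ*(s-t)) • (V s * g s) = 0 :=
      setIntegral_eq_zero_of_forall_eq_zero (fun s hs => by
        rw [hV0 s (le_trans (le_of_lt hs) (le_abs_self s)), zero_mul, smul_zero])
    have h2 : ∫ s in Ioi t, Real.sinh (κ*(s-t)) • (V s * f s)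
        = ∫ s in Ioc t R₀, Real.sinh (κ*(s-t)) • (V s * f s) := by
      rw [aux_split _ hintf ht2, h2z, add_zero]
    have h3 : ∫ s in Ioi t, Real.sinh (κ*(s-t)) • (V s * g s)
        = ∫ s in Ioc t R₀, Real.sinh (κ*(s-t)) • (V s * g s) := by
      rw [aux_split _ hintg ht2, h3z, add_zero]
    rw [h1, integral_sub hintf.integrableOn hintg.integrableOn, ← h2, ← h3, smul_sub]
    abel
  rw [hdiff, norm_smul, norm_inv, Real.norm_eq_abs, abs_of_pos hκ, mul_assoc]
  apply mul_le_mul_of_nonneg_left _ (inv_nonneg.2 hκ.le)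
  calc ‖∫ s in Ioc t R₀, Real.sinh (κ*(s-t)) • (V s * (f s - g s))‖
      ≤ ∫ s in Ioc t R₀, ‖Real.sinh (κ*(s-t)) • (V s * (f s - g s))‖ :=
        norm_integral_le_integral_norm _
    _ ≤ ∫ s in Ioc t R₀, (Real.sinh (κ*(2*R₀)) * M) * ‖f s - g s‖ := by
        apply setIntegral_mono_on
        · exact ((((Real.continuous_sinh.comp (continuous_const.mul
            (continuous_id.sub continuous_const)))).smul (hV.mul (hf.sub hg))).norm).integrableOn_Ioc
        · exact (continuous_const.mul ((hf.sub hg).norm)).integrableOn_Ioc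
        · exact measurableSet_Ioc
        · intro s hs
          rw [norm_smul, Real.norm_eq_abs,
            abs_of_nonneg (Real.sinh_nonneg_iff.2 (by nlinarith [hs.1.le] : (0:ℝ) ≤ κ*(s-t)))]
          have hs1 : Real.sinh (κ*(s-t)) ≤ Real.sinh (κ*(2*R₀)) := by
            apply Real.sinh_le_sinh.2
            nlinarith [hs.2]
          calc Real.sinh (κ*(s-t)) * ‖V s * (f s - g s)‖
              ≤ Real.sinh (κ*(2*R₀)) * (M * ‖f s - g s‖) := by
                apply mul_le_mul hs1 (le_trans (norm_mul_le _ _)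
                  (mul_le_mul_of_nonneg_right (hM s) (norm_nonneg _))) (norm_nonneg _)
                exact Real.sinh_nonneg_iff.2 (by nlinarith)
            _ = (Real.sinh (κ*(2*R₀)) * M) * ‖f s - g s‖ := by ring
    _ = (Real.sinh (κ*(2*R₀)) * M) * ∫ s in Ioc t R₀, ‖f s - g s‖ := integral_const_mul _ _

variable (hR : -R₀ ≤ R₀)

noncomputable def Tmap (hκ0 : κ ≠ 0) (hVc : Continuous V) (hVs : ∀ s, R₀ ≤ |s| → V s = 0) :
    C(Icc (-R₀) R₀, Matrix n n ℂ) → C(Icc (-R₀) R₀, Matrix n n ℂ) := fun f =>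
  ⟨fun τ => Phi κ (fun s => V s * f (projIcc (-R₀) R₀ hR s)) 1 τ.1,
   (Phi_continuous κ R₀ _ 1 (hVc.mul (f.continuous.comp continuous_projIcc))
     (fun s hs => by simp only [Pi.mul_apply, Function.comp_apply]; rw [hVs s hs, zero_mul]) hκ0).comp continuous_subtype_val⟩

include hV hV0 hκ hR₀ hM in
lemma iterate_bound (f g : C(Icc (-R₀) R₀, Matrix n n ℂ)) (k : ℕ) (τ : Icc (-R₀) R₀) :
    ‖((Tmap V κ R₀ hR hκ.ne' hV hV0)^[k] f) τ - ((Tmap V κ R₀ hR hκ.ne' hV hV0)^[k] g) τ‖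
      ≤ dist f g * ((κ⁻¹ * (Real.sinh (κ*(2*R₀)) * M)) * (R₀ - τ))^k / (Nat.factorial k) := by
  set C := κ⁻¹ * (Real.sinh (κ*(2*R₀)) * M) with hC
  have hM0 : 0 ≤ M := le_trans (norm_nonneg _) (hM 0)
  have hC0 : 0 ≤ C := by
    apply mul_nonneg (inv_nonneg.2 hκ.le) (mul_nonneg (Real.sinh_nonneg_iff.2 (by positivity)) hM0)
  clear_value C
  induction k generalizing τ with
  | zero =>
      simpa [← dist_eq_norm] using ContinuousMap.dist_apply_le_dist τ
  | succ k ih =>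
      rw [Function.iterate_succ_apply', Function.iterate_succ_apply']
      set Fk := (Tmap V κ R₀ hR hκ.ne' hV hV0)^[k] f with hFk
      set Gk := (Tmap V κ R₀ hR hκ.ne' hV hV0)^[k] g with hGk
      have hcf : Continuous (fun s => Fk (projIcc (-R₀) R₀ hR s)) :=
        Fk.continuous.comp continuous_projIcc
      have hcg : Continuous (fun s => Gk (projIcc (-R₀) R₀ hR s)) :=
        Gk.continuous.comp continuous_projIcc
      have hcore := core_estimate V κ R₀ M hV hV0 hκ hR₀ hM _ _ hcf hcg τ.1 τ.2
      rw [← hC] at hcore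
      have hτ1 := τ.2.1
      have hτ2 := τ.2.2
      calc ‖(Tmap V κ R₀ hR hκ.ne' hV hV0) Fk τ - (Tmap V κ R₀ hR hκ.ne' hV hV0) Gk τ‖
          ≤ C * ∫ s in Ioc (τ:ℝ) R₀, ‖Fk (projIcc (-R₀) R₀ hR s) - Gk (projIcc (-R₀) R₀ hR s)‖ :=
            hcore
        _ ≤ C * ∫ s in Ioc (τ:ℝ) R₀, dist f g * (C*(R₀ - s))^k / (Nat.factorial k) := by
            apply mul_le_mul_of_nonneg_left _ hC0
            apply setIntegral_mono_on
            · exact ((hcf.sub hcg).norm).integrableOn_Ioc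
            · exact ((continuous_const.mul ((continuous_const.mul
                (continuous_const.sub continuous_id)).pow k)).div_const _).integrableOn_Ioc
            · exact measurableSet_Ioc
            · intro s hs
              have hsmem : s ∈ Icc (-R₀) R₀ := ⟨by linarith [hs.1], hs.2⟩
              have hproj : ((projIcc (-R₀) R₀ hR s : Icc (-R₀) R₀) : ℝ) = s := by
                rw [projIcc_of_mem hR hsmem]
              have := ih (projIcc (-R₀) R₀ hR s)
              rw [hproj] at this
              exact this
        _ = dist f g * (C*(R₀ - τ))^(k+1) / (Nat.factorial (k+1)) := by
            have hpt : ∀ s : ℝ, dist f g * (C*(R₀ - s))^k / (Nat.factorial k)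
                = (dist f g * C^k / (Nat.factorial k)) * (R₀ - s)^k := fun s => by
              rw [mul_pow]; ring
            simp only [hpt]
            rw [integral_const_mul]
            have hIoc : ∫ s in Ioc (τ:ℝ) R₀, (R₀ - s)^k = ∫ s in (τ:ℝ)..R₀, (R₀ - s)^k := by
              rw [intervalIntegral.integral_of_le hτ2]
            rw [hIoc, intervalIntegral.integral_comp_sub_left (fun u => u^k) R₀, sub_self,
              integral_pow]
            have hfac : (Nat.factorial (k+1) : ℝ) = (k+1) * (Nat.factorial k) := by
              rw [Nat.factorial_succ]; push_cast; ring
            have hfk : (Nat.factorial k : ℝ) ≠ 0 := by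
              exact_mod_cast (Nat.factorial_pos k).ne'
            have hk1 : ((k:ℝ)+1) ≠ 0 := by positivity
            rw [zero_pow (Nat.succ_ne_zero k), sub_zero, mul_pow, hfac]
            push_cast
            field_simp
            ring

include hV hV0 hκ hR₀ hM in
lemma exists_fixed : ∃ F₀ : C(Icc (-R₀) R₀, Matrix n n ℂ),
    (Tmap V κ R₀ hR hκ.ne' hV hV0) F₀ = F₀ ∧
    ∀ G, (Tmap V κ R₀ hR hκ.ne' hV hV0) G = G → G = F₀ := by
  have hM0 : 0 ≤ M := le_trans (norm_nonneg _) (hM 0)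
  set C := κ⁻¹ * (Real.sinh (κ*(2*R₀)) * M) with hC
  have hC0 : 0 ≤ C := by
    apply mul_nonneg (inv_nonneg.2 hκ.le) (mul_nonneg (Real.sinh_nonneg_iff.2 (by positivity)) hM0)
  have htend := FloorSemiring.tendsto_pow_div_factorial_atTop (C*(2*R₀))
  obtain ⟨k, hk⟩ := (htend.eventually (gt_mem_nhds one_pos)).exists
  have hq0 : (0:ℝ) ≤ (C*(2*R₀))^k / (Nat.factorial k) := by positivity
  have hLip : ∀ f g : C(Icc (-R₀) R₀, Matrix n n ℂ),
      dist ((Tmap V κ R₀ hR hκ.ne' hV hV0)^[k] f) ((Tmap V κ R₀ hR hκ.ne' hV hV0)^[k] g)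
        ≤ ((C*(2*R₀))^k / (Nat.factorial k)) * dist f g := by
    intro f g
    rw [ContinuousMap.dist_le (by positivity)]
    intro τ
    have hb := iterate_bound V κ R₀ M hV hV0 hκ hR₀ hM hR f g k τ
    rw [← hC] at hb
    rw [dist_eq_norm]
    refine le_trans hb ?_
    have h1 : (C*(R₀-(τ:ℝ)))^k ≤ (C*(2*R₀))^k := by
      apply pow_le_pow_left₀ (mul_nonneg hC0 (by linarith [τ.2.2]))
      exact mul_le_mul_of_nonneg_left (by linarith [τ.2.1]) hC0
    calc dist f g * (C*(R₀-(τ:ℝ)))^k / (Nat.factorial k)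
        ≤ dist f g * (C*(2*R₀))^k / (Nat.factorial k) := by gcongr
      _ = ((C*(2*R₀))^k / (Nat.factorial k)) * dist f g := by ring
  set Kc : NNReal := ⟨(C*(2*R₀))^k / (Nat.factorial k), hq0⟩ with hKc
  have hcontr : ContractingWith Kc ((Tmap V κ R₀ hR hκ.ne' hV hV0)^[k]) := by
    constructor
    · exact_mod_cast hk
    · exact LipschitzWith.of_dist_le_mul hLip
  haveI : Nonempty C(Icc (-R₀) R₀, Matrix n n ℂ) := ⟨0⟩
  haveI : @CompleteSpace (Matrix n n ℂ)
      (Matrix.frobeniusNormedAddCommGroup : NormedAddCommGroup (Matrix n n ℂ)).toUniformSpace :=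
    FiniteDimensional.complete ℂ _
  letI : UniformSpace (Matrix n n ℂ) :=
    (Matrix.frobeniusNormedAddCommGroup : NormedAddCommGroup (Matrix n n ℂ)).toUniformSpace
  refine ⟨ContractingWith.fixedPoint _ hcontr,
    ContractingWith.isFixedPt_fixedPoint_iterate hcontr, ?_⟩
  intro G hG
  exact hcontr.fixedPoint_unique' (Function.IsFixedPt.iterate hG k)
    hcontr.fixedPoint_isFixedPt
end Mat

/-- Jost solutions for a compactly supported continuous matrix potential: for `z < 0` and
`κ = √(−z)`, the Volterra integral equation
`F(t) = e^{-κt} I + κ⁻¹ ∫_t^∞ sinh(κ(s − t)) V(s) F(s) ds` has a unique continuous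
solution `F`; this `F` is twice continuously differentiable, solves `−F'' + V F = zF`,
and `F(t) = e^{-κt} I` for `t ≥ R`. -/
theorem jost_solution_exists_unique {n : Type*} [Fintype n] [DecidableEq n]
    (V : ℝ → Matrix n n ℂ) (hVcont : Continuous V)
    (R : ℝ) (hVsupp : ∀ t : ℝ, R ≤ |t| → V t = 0)
    (z : ℝ) (hz : z < 0) (κ : ℝ) (hκ : κ = Real.sqrt (-z)) :
    (∃! F : ℝ → Matrix n n ℂ, Continuous F ∧
      ∀ t : ℝ, F t = Real.exp (-(κ * t)) • (1 : Matrix n n ℂ) +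
        κ⁻¹ • ∫ s in Set.Ioi t, Real.sinh (κ * (s - t)) • (V s * F s)) ∧
    ∀ F : ℝ → Matrix n n ℂ,
      (Continuous F ∧
        ∀ t : ℝ, F t = Real.exp (-(κ * t)) • (1 : Matrix n n ℂ) +
          κ⁻¹ • ∫ s in Set.Ioi t, Real.sinh (κ * (s - t)) • (V s * F s)) →
      (∃ F' F'' : ℝ → Matrix n n ℂ,
        (∀ t, HasDerivAt F (F' t) t) ∧ (∀ t, HasDerivAt F' (F'' t) t) ∧
        Continuous F'' ∧
        ∀ t, -F'' t + V t * F t = (z : ℂ) • F t) ∧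
      ∀ t : ℝ, R ≤ t → F t = Real.exp (-(κ * t)) • (1 : Matrix n n ℂ) := by
  have hκpos : 0 < κ := by rw [hκ]; exact Real.sqrt_pos.2 (by linarith)
  have hκ2 : κ^2 = -z := by rw [hκ, Real.sq_sqrt (by linarith : (0:ℝ) ≤ -z)]
  set R₀ : ℝ := max R 1 with hR₀def
  have hR₀ : 0 < R₀ := lt_of_lt_of_le one_pos (le_max_right _ _)
  have hR : -R₀ ≤ R₀ := by linarith
  have hV0 : ∀ s : ℝ, R₀ ≤ |s| → V s = 0 := fun s hs =>
    hVsupp s (le_trans (le_max_left _ _) hs)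
  have habs : ∀ s : ℝ, s ∉ Icc (-R₀) R₀ → R₀ ≤ |s| := by
    intro s hs
    rw [mem_Icc, not_and_or, not_le, not_le] at hs
    rcases hs with hs | hs
    · exact le_trans (by linarith) (neg_le_abs s)
    · exact le_trans hs.le (le_abs_self s)
  obtain ⟨M', hM'⟩ := (isCompact_Icc : IsCompact (Icc (-R₀) R₀)).exists_bound_of_continuousOn
    hVcont.continuousOn
  have hM : ∀ s, ‖V s‖ ≤ max M' 0 := by
    intro s
    by_cases hsm : s ∈ Icc (-R₀) R₀
    · exact le_trans (hM' s hsm) (le_max_left _ _)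
    · rw [hV0 s (habs s hsm)]; simp
  obtain ⟨F₀, hfix, huniq⟩ :=
    exists_fixed V κ R₀ (max M' 0) hVcont hV0 hκpos hR₀ hM hR
  have hprojeq : ∀ s : ℝ, s ∈ Icc (-R₀) R₀ → ((projIcc (-R₀) R₀ hR s : Icc (-R₀) R₀) : ℝ) = s :=
    fun s hs => by rw [projIcc_of_mem hR hs]
  -- the candidate solution
  have hWc : Continuous (fun s => V s * F₀ (projIcc (-R₀) R₀ hR s)) :=
    hVcont.mul (F₀.continuous.comp continuous_projIcc)
  have hWs : ∀ s, R₀ ≤ |s| → V s * F₀ (projIcc (-R₀) R₀ hR s) = 0 := fun s hs => by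
    rw [hV0 s hs, zero_mul]
  have hFsolc : Continuous (Phi κ (fun s => V s * F₀ (projIcc (-R₀) R₀ hR s)) 1) :=
    Phi_continuous κ R₀ _ 1 hWc hWs hκpos.ne'
  have hIcc_eq : ∀ τ : Icc (-R₀) R₀,
      Phi κ (fun s => V s * F₀ (projIcc (-R₀) R₀ hR s)) 1 (τ : ℝ) = F₀ τ :=
    fun τ => ContinuousMap.congr_fun hfix τ
  have hVF : ∀ s, V s * Phi κ (fun s' => V s' * F₀ (projIcc (-R₀) R₀ hR s')) 1 s
      = V s * F₀ (projIcc (-R₀) R₀ hR s) := by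
    intro s
    by_cases hsm : s ∈ Icc (-R₀) R₀
    · have h1 : Phi κ (fun s' => V s' * F₀ (projIcc (-R₀) R₀ hR s')) 1 s
          = F₀ (projIcc (-R₀) R₀ hR s) := by
        have h2 := hIcc_eq (projIcc (-R₀) R₀ hR s)
        rwa [hprojeq s hsm] at h2
      rw [h1]
    · rw [hV0 s (habs s hsm), zero_mul, zero_mul]
  have hFsol_eq : ∀ t : ℝ,
      Phi κ (fun s => V s * F₀ (projIcc (-R₀) R₀ hR s)) 1 t
        = Real.exp (-(κ * t)) • (1 : Matrix n n ℂ) + κ⁻¹ • ∫ s in Set.Ioi t,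
            Real.sinh (κ * (s - t)) •
              (V s * Phi κ (fun s' => V s' * F₀ (projIcc (-R₀) R₀ hR s')) 1 s) := by
    intro t
    simp only [hVF]
    rw [Phi]
  -- uniqueness of continuous solutions
  have hsol_eq : ∀ G : ℝ → Matrix n n ℂ, Continuous G →
      (∀ t : ℝ, G t = Real.exp (-(κ * t)) • (1 : Matrix n n ℂ) +
        κ⁻¹ • ∫ s in Set.Ioi t, Real.sinh (κ * (s - t)) • (V s * G s)) →
      ∀ t : ℝ, G t = Phi κ (fun s => V s * F₀ (projIcc (-R₀) R₀ hR s)) 1 t := by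
    intro G hGc hGeq
    have hGW : ∀ s : ℝ, V s * (⟨fun τ => G τ, hGc.comp continuous_subtype_val⟩ :
        C(Icc (-R₀) R₀, Matrix n n ℂ)) (projIcc (-R₀) R₀ hR s) = V s * G s := by
      intro s
      by_cases hsm : s ∈ Icc (-R₀) R₀
      · simp only [ContinuousMap.coe_mk]
        rw [hprojeq s hsm]
      · rw [hV0 s (habs s hsm), zero_mul, zero_mul]
    have hGfix : Tmap V κ R₀ hR hκpos.ne' hVcont hV0
        (⟨fun τ => G τ, hGc.comp continuous_subtype_val⟩ : C(Icc (-R₀) R₀, Matrix n n ℂ))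
        = ⟨fun τ => G τ, hGc.comp continuous_subtype_val⟩ := by
      apply ContinuousMap.ext
      intro τ
      show Phi κ _ 1 (τ : ℝ) = G (τ : ℝ)
      rw [hGeq (τ : ℝ), Phi]
      congr 1
      congr 1
      congr 1
      funext s
      exact congrArg (Real.sinh (κ * (s - τ)) • ·) (hGW s)
    have hG₀ := huniq _ hGfix
    intro t
    have hint : ∀ s : ℝ, V s * G s = V s *
        Phi κ (fun s' => V s' * F₀ (projIcc (-R₀) R₀ hR s')) 1 s := by
      intro s
      rw [hVF s, ← hGW s, hG₀]
      rfl
    rw [hGeq t, hFsol_eq t]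
    simp only [hint]
  constructor
  · -- existence and uniqueness
    refine ⟨Phi κ (fun s => V s * F₀ (projIcc (-R₀) R₀ hR s)) 1, ⟨hFsolc, hFsol_eq⟩, ?_⟩
    intro G hG
    exact funext (hsol_eq G hG.1 hG.2)
  · -- regularity for an arbitrary solution
    intro F hF
    obtain ⟨hFc, hFeq⟩ := hF
    have hWFc : Continuous (fun s => V s * F s) := hVcont.mul hFc
    have hWFs : ∀ s, R₀ ≤ |s| → V s * F s = 0 := fun s hs => by rw [hV0 s hs, zero_mul]
    have hFPhi : ∀ u : ℝ, F u = Phi κ (fun s => V s * F s) 1 u := fun u => hFeq u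
    constructor
    · refine ⟨Phi' κ (fun s => V s * F s) 1,
        fun t => (κ^2) • F t + V t * F t, ?_, ?_, ?_, ?_⟩
      · intro t
        exact (Phi_hasDeriv κ R₀ _ 1 hWFc hWFs hκpos.ne' t).congr_of_eventuallyEq
          (Filter.Eventually.of_forall hFPhi)
      · intro t
        have hd := Phi'_hasDeriv κ R₀ _ 1 hWFc hWFs hκpos.ne' t
        rw [show Phi κ (fun s => V s * F s) 1 t = F t from (hFPhi t).symm] at hd
        exact hd
      · exact (hFc.const_smul (κ^2)).add (hVcont.mul hFc)
      · intro t
        have hzs : (z : ℂ) • F t = z • F t := by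
          ext i j; simp [Matrix.smul_apply, Complex.real_smul]
        rw [hzs, show z = -(κ^2) by linarith]
        module
    · intro t ht
      rw [hFeq t]
      have hzero : ∫ s in Set.Ioi t, Real.sinh (κ * (s - t)) • (V s * F s) = 0 :=
        setIntegral_eq_zero_of_forall_eq_zero (fun s hs => by
          rw [hVsupp s (le_trans (le_trans ht (le_of_lt hs)) (le_abs_self s)), zero_mul,
            smul_zero])
      rw [hzero, smul_zero, add_zero]
end
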